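/- arXiv:1302.5673 — 3 statements merged into one kernel-verified Lean document; each statement's English description precedes it below -/
import Mathlib

section
/- In any semi-magic square (a 3×3 array containing 0 through 8 exactly once with all rows and columns summing to 12), either the three row-sets are {0,4,8},{1,5,6},{2,3,7} and the three column-sets are {0,5,7},{2,4,6},{1,3,8}, or vice versa. -/
set_option maxRecDepth 10000

open Finset

def T8 : Finset (Finset ℕ) := {{0,4,8},{0,5,7},{1,3,8},{1,4,7},{1,5,6},{2,3,7},{2,4,6},{3,4,5}}

lemma tripleA : ∀ s ∈ (Finset.range 9).powerset, s.card = 3 → s.sum id = 12 → s ∈ T8 := by decide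

lemma tripleB : ∀ a ∈ T8, ∀ b ∈ T8, ∀ c ∈ T8, a ∪ (b ∪ c) = Finset.range 9 →
    ({a,b,c} : Finset (Finset ℕ)) = {{0,4,8},{1,5,6},{2,3,7}} ∨
    ({a,b,c} : Finset (Finset ℕ)) = {{0,5,7},{2,4,6},{1,3,8}} := by decide

lemma image_fin3 (g : Fin 3 → Finset ℕ) :
    Finset.image g Finset.univ = {g 0, g 1, g 2} := by
  have h : (Finset.univ : Finset (Fin 3)) = {0,1,2} := by decide
  rw [h]; simp

lemma cross_contra (f : Fin 3 × Fin 3 → Fin 9) (hbij : Function.Bijective f)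
    (P : Finset (Finset ℕ)) (hPcard : P.card = 3)
    (u v : Fin 9) (huv : u ≠ v)
    (hiff : ∀ s ∈ P, ∀ t ∈ P, u.val ∈ s → v.val ∈ t → s = t)
    (hR : Finset.image (fun i => Finset.image (fun j => (f (i, j)).val) Finset.univ) Finset.univ = P)
    (hC : Finset.image (fun j => Finset.image (fun i => (f (i, j)).val) Finset.univ) Finset.univ = P) :
    False := by
  set R : Fin 3 → Finset ℕ := fun i => Finset.image (fun j => (f (i, j)).val) Finset.univ with hRdef
  set C : Fin 3 → Finset ℕ := fun j => Finset.image (fun i => (f (i, j)).val) Finset.univ with hCdef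
  obtain ⟨p, hp⟩ := hbij.surjective u
  obtain ⟨q, hq⟩ := hbij.surjective v
  have hRinj : ∀ i i' : Fin 3, R i = R i' → i = i' := by
    intro i i' h
    have hcard : (Finset.image R Finset.univ).card = (Finset.univ : Finset (Fin 3)).card := by
      rw [hR, hPcard]; simp
    have := (Finset.card_image_iff).1 hcard
    exact this (Finset.mem_univ i) (Finset.mem_univ i') h
  have hCinj : ∀ j j' : Fin 3, C j = C j' → j = j' := by
    intro j j' h
    have hcard : (Finset.image C Finset.univ).card = (Finset.univ : Finset (Fin 3)).card := by
      rw [hC, hPcard]; simp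
    have := (Finset.card_image_iff).1 hcard
    exact this (Finset.mem_univ j) (Finset.mem_univ j') h
  have hmemRu : u.val ∈ R p.1 := by
    apply Finset.mem_image.2 ⟨p.2, Finset.mem_univ _, ?_⟩
    rw [Prod.mk.eta, hp]
  have hmemRv : v.val ∈ R q.1 := by
    apply Finset.mem_image.2 ⟨q.2, Finset.mem_univ _, ?_⟩
    rw [Prod.mk.eta, hq]
  have hmemCu : u.val ∈ C p.2 := by
    apply Finset.mem_image.2 ⟨p.1, Finset.mem_univ _, ?_⟩
    rw [Prod.mk.eta, hp]
  have hmemCv : v.val ∈ C q.2 := by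
    apply Finset.mem_image.2 ⟨q.1, Finset.mem_univ _, ?_⟩
    rw [Prod.mk.eta, hq]
  have hRP : ∀ i, R i ∈ P := fun i => hR ▸ Finset.mem_image_of_mem R (Finset.mem_univ i)
  have hCP : ∀ j, C j ∈ P := fun j => hC ▸ Finset.mem_image_of_mem C (Finset.mem_univ j)
  have h1 : p.1 = q.1 := hRinj _ _ (hiff _ (hRP p.1) _ (hRP q.1) hmemRu hmemRv)
  have h2 : p.2 = q.2 := hCinj _ _ (hiff _ (hCP p.2) _ (hCP q.2) hmemCu hmemCv)
  have : p = q := Prod.ext h1 h2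
  exact huv (by rw [← hp, ← hq, this])

theorem semimagic_row_col_sets (f : Fin 3 × Fin 3 → Fin 9)
    (hbij : Function.Bijective f)
    (hrow : ∀ i : Fin 3, ∑ j : Fin 3, (f (i, j)).val = 12)
    (hcol : ∀ j : Fin 3, ∑ i : Fin 3, (f (i, j)).val = 12) :
    (Finset.image (fun i => Finset.image (fun j => (f (i, j)).val) Finset.univ) Finset.univ
        = {{0, 4, 8}, {1, 5, 6}, {2, 3, 7}} ∧
      Finset.image (fun j => Finset.image (fun i => (f (i, j)).val) Finset.univ) Finset.univ
        = {{0, 5, 7}, {2, 4, 6}, {1, 3, 8}}) ∨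
    (Finset.image (fun i => Finset.image (fun j => (f (i, j)).val) Finset.univ) Finset.univ
        = {{0, 5, 7}, {2, 4, 6}, {1, 3, 8}} ∧
      Finset.image (fun j => Finset.image (fun i => (f (i, j)).val) Finset.univ) Finset.univ
        = {{0, 4, 8}, {1, 5, 6}, {2, 3, 7}}) := by
  set R : Fin 3 → Finset ℕ := fun i => Finset.image (fun j => (f (i, j)).val) Finset.univ with hRdef
  set C : Fin 3 → Finset ℕ := fun j => Finset.image (fun i => (f (i, j)).val) Finset.univ with hCdef
  have hinj := hbij.injective
  have hvalinj : ∀ i : Fin 3, Function.Injective (fun j => (f (i, j)).val) := by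
    intro i j j' h
    have : f (i, j) = f (i, j') := Fin.val_injective h
    exact (Prod.mk.injEq .. ▸ hinj this).2
  have hvalinj' : ∀ j : Fin 3, Function.Injective (fun i => (f (i, j)).val) := by
    intro j i i' h
    have : f (i, j) = f (i', j) := Fin.val_injective h
    exact (Prod.mk.injEq .. ▸ hinj this).1
  have hRT8 : ∀ i, R i ∈ T8 := by
    intro i
    apply tripleA
    · exact Finset.mem_powerset.2 (by
        intro x hx
        obtain ⟨j, _, hj⟩ := Finset.mem_image.1 hx
        rw [Finset.mem_range, ← hj]; exact (f (i, j)).isLt)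
    · rw [hRdef, Finset.card_image_of_injective _ (hvalinj i)]; simp
    · rw [hRdef, Finset.sum_image (fun a _ b _ h => hvalinj i h)]
      simpa using hrow i
  have hCT8 : ∀ j, C j ∈ T8 := by
    intro j
    apply tripleA
    · exact Finset.mem_powerset.2 (by
        intro x hx
        obtain ⟨i, _, hi⟩ := Finset.mem_image.1 hx
        rw [Finset.mem_range, ← hi]; exact (f (i, j)).isLt)
    · rw [hCdef, Finset.card_image_of_injective _ (hvalinj' j)]; simp
    · rw [hCdef, Finset.sum_image (fun a _ b _ h => hvalinj' j h)]
      simpa using hcol j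
  have hRunion : R 0 ∪ (R 1 ∪ R 2) = Finset.range 9 := by
    apply Finset.Subset.antisymm
    · intro x hx
      rcases Finset.mem_union.1 hx with h | h
      · exact Finset.mem_powerset.1 (Finset.mem_powerset.2 (fun y hy => by
          obtain ⟨j, _, hj⟩ := Finset.mem_image.1 hy
          rw [Finset.mem_range, ← hj]; exact (f (0, j)).isLt)) h
      · rcases Finset.mem_union.1 h with h | h
        · obtain ⟨j, _, hj⟩ := Finset.mem_image.1 h
          rw [Finset.mem_range, ← hj]; exact (f (1, j)).isLt
        · obtain ⟨j, _, hj⟩ := Finset.mem_image.1 h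
          rw [Finset.mem_range, ← hj]; exact (f (2, j)).isLt
    · intro x hx
      have hx9 : x < 9 := Finset.mem_range.1 hx
      obtain ⟨p, hp⟩ := hbij.surjective ⟨x, hx9⟩
      have hxmem : x ∈ R p.1 := by
        apply Finset.mem_image.2 ⟨p.2, Finset.mem_univ _, ?_⟩
        rw [Prod.mk.eta, hp]
      obtain ⟨i, j⟩ := p
      fin_cases i
      · exact Finset.mem_union.2 (Or.inl hxmem)
      · exact Finset.mem_union.2 (Or.inr (Finset.mem_union.2 (Or.inl hxmem)))
      · exact Finset.mem_union.2 (Or.inr (Finset.mem_union.2 (Or.inr hxmem)))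
  have hCunion : C 0 ∪ (C 1 ∪ C 2) = Finset.range 9 := by
    apply Finset.Subset.antisymm
    · intro x hx
      rcases Finset.mem_union.1 hx with h | h
      · obtain ⟨i, _, hi⟩ := Finset.mem_image.1 h
        rw [Finset.mem_range, ← hi]; exact (f (i, 0)).isLt
      · rcases Finset.mem_union.1 h with h | h
        · obtain ⟨i, _, hi⟩ := Finset.mem_image.1 h
          rw [Finset.mem_range, ← hi]; exact (f (i, 1)).isLt
        · obtain ⟨i, _, hi⟩ := Finset.mem_image.1 h
          rw [Finset.mem_range, ← hi]; exact (f (i, 2)).isLt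
    · intro x hx
      have hx9 : x < 9 := Finset.mem_range.1 hx
      obtain ⟨p, hp⟩ := hbij.surjective ⟨x, hx9⟩
      have hxmem : x ∈ C p.2 := by
        apply Finset.mem_image.2 ⟨p.1, Finset.mem_univ _, ?_⟩
        rw [Prod.mk.eta, hp]
      obtain ⟨i, j⟩ := p
      fin_cases j
      · exact Finset.mem_union.2 (Or.inl hxmem)
      · exact Finset.mem_union.2 (Or.inr (Finset.mem_union.2 (Or.inl hxmem)))
      · exact Finset.mem_union.2 (Or.inr (Finset.mem_union.2 (Or.inr hxmem)))
  have hRimg : Finset.image R Finset.univ = {R 0, R 1, R 2} := image_fin3 R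
  have hCimg : Finset.image C Finset.univ = {C 0, C 1, C 2} := image_fin3 C
  have hrows := tripleB _ (hRT8 0) _ (hRT8 1) _ (hRT8 2) hRunion
  have hcols := tripleB _ (hCT8 0) _ (hCT8 1) _ (hCT8 2) hCunion
  rcases hrows with h1 | h1 <;> rcases hcols with h2 | h2
  · exfalso
    apply cross_contra f hbij {{0,4,8},{1,5,6},{2,3,7}} (by decide) 0 4 (by decide)
      (by decide) (hRimg.trans h1) (hCimg.trans h2)
  · exact Or.inl ⟨hRimg.trans h1, hCimg.trans h2⟩
  · exact Or.inr ⟨hRimg.trans h1, hCimg.trans h2⟩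
  · exfalso
    apply cross_contra f hbij {{0,5,7},{2,4,6},{1,3,8}} (by decide) 0 5 (by decide)
      (by decide) (hRimg.trans h1) (hCimg.trans h2)
end

section
/- In any 3×3 magic square modulo 9 (an array containing each of 0,...,8 once, with every row, column, and both diagonals summing to 0 mod 9), the center entry belongs to {0,3,6}, and exactly one of the two diagonals has entry set equal to {0,3,6}. -/
theorem magic_key : ∀ a b e : ZMod 9, 3*e = 0 →
    ([a, b, -a-b, -2*a-b+e, e, 2*a+b-2*e, a+b-e, -b-e, -a-e] : List (ZMod 9)).Nodup →
    (e = 0 ∨ e = 3 ∨ e = 6) ∧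
    Xor' (({a, e, -a-e} : Finset (ZMod 9)) = {0,3,6})
         (({-a-b, e, a+b-e} : Finset (ZMod 9)) = {0,3,6}) := by unfold Xor'; decide

theorem magic_square_mod9_center_and_diagonal (f : Fin 3 × Fin 3 → ZMod 9)
    (hbij : Function.Bijective f)
    (hrow : ∀ i : Fin 3, ∑ j : Fin 3, f (i, j) = 0)
    (hcol : ∀ j : Fin 3, ∑ i : Fin 3, f (i, j) = 0)
    (hdiag : ∑ i : Fin 3, f (i, i) = 0)
    (hantidiag : ∑ i : Fin 3, f (i, 2 - i) = 0) :
    f (1, 1) ∈ ({0, 3, 6} : Set (ZMod 9)) ∧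
    Xor' (({f (0, 0), f (1, 1), f (2, 2)} : Finset (ZMod 9)) = {0, 3, 6})
         (({f (0, 2), f (1, 1), f (2, 0)} : Finset (ZMod 9)) = {0, 3, 6}) := by
  have hr0 := hrow 0
  have hr1 := hrow 1
  have hr2 := hrow 2
  have hc0 := hcol 0
  have hc1 := hcol 1
  simp only [Fin.sum_univ_three] at hr0 hr1 hr2 hc0 hc1 hdiag hantidiag
  have h20 : (2 - 0 : Fin 3) = 2 := by decide
  have h21 : (2 - 1 : Fin 3) = 1 := by decide
  have h22 : (2 - 2 : Fin 3) = 0 := by decide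
  rw [h20, h21, h22] at hantidiag
  set a := f (0, 0) with ha
  set b := f (0, 1) with hb
  set e := f (1, 1) with he
  -- derived entries
  have h3e : 3 * e = 0 := by linear_combination hc1 + hdiag + hantidiag - hr0 - hr2
  have hc : f (0, 2) = -a - b := by linear_combination hr0
  have hj : f (2, 2) = -a - e := by linear_combination hdiag
  have hh : f (2, 0) = a + b - e := by linear_combination hantidiag - hr0
  have hd : f (1, 0) = -2*a - b + e := by linear_combination hc0 - hh
  have hk : f (1, 2) = 2*a + b - 2*e := by linear_combination hr1 - hd
  have hi : f (2, 1) = -b - e := by linear_combination hc1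
  have hpos : ([(0,0),(0,1),(0,2),(1,0),(1,1),(1,2),(2,0),(2,1),(2,2)] :
      List (Fin 3 × Fin 3)).Nodup := by decide
  have hnd : ([a, b, -a-b, -2*a-b+e, e, 2*a+b-2*e, a+b-e, -b-e, -a-e] :
      List (ZMod 9)).Nodup := by
    have := hpos.map hbij.injective
    simpa [ha, hb, he, hc, hj, hh, hd, hk, hi] using this
  obtain ⟨hcen, hxor⟩ := magic_key a b e h3e hnd
  refine ⟨?_, ?_⟩
  · simpa [Set.mem_insert_iff] using hcen
  · rw [hj, hc, hh]
    exact hxor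
end

section
/- Let G be a finite group acting on a finite nonempty set X with N orbits. If |X| > N·|G|/2, then there exists x ∈ X whose stabilizer is trivial. -/
theorem exists_trivial_stabilizer_of_large_set (G X : Type*) [Group G] [Finite G]
    [MulAction G X] [Finite X] [Nonempty X]
    (h : (Nat.card X : ℚ) >
      (Nat.card (Quotient (MulAction.orbitRel G X)) : ℚ) * (Nat.card G : ℚ) / 2) :
    ∃ x : X, MulAction.stabilizer G x = ⊥ := by
  by_contra hc
  push_neg at hc
  classical
  have fX := Fintype.ofFinite X
  have fQ := Fintype.ofFinite (Quotient (MulAction.orbitRel G X))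
  -- orbit-stabilizer
  have key : ∀ x : X, Nat.card (MulAction.orbit G x) * Nat.card (MulAction.stabilizer G x)
      = Nat.card G := by
    intro x
    rw [← Nat.card_prod]
    exact Nat.card_congr (MulAction.orbitProdStabilizerEquivGroup G x)
  have hstab : ∀ x : X, 2 ≤ Nat.card (MulAction.stabilizer G x) := fun x =>
    (Subgroup.one_lt_card_iff_ne_bot _).mpr (hc x)
  have horb : ∀ x : X, (Nat.card (MulAction.orbit G x) : ℚ) ≤ (Nat.card G : ℚ) / 2 := by
    intro x
    rw [le_div_iff₀ (by norm_num), ← key x]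
    push_cast
    have h2 : (2 : ℚ) ≤ (Nat.card (MulAction.stabilizer G x) : ℚ) := by
      exact_mod_cast hstab x
    have hpos : (0 : ℚ) ≤ (Nat.card (MulAction.orbit G x) : ℚ) := by positivity
    nlinarith
  have hcardX : Nat.card X =
      ∑ ω : Quotient (MulAction.orbitRel G X), Nat.card (MulAction.orbit G ω.out) := by
    rw [Nat.card_congr (MulAction.selfEquivSigmaOrbits G X)]
    simp [Nat.card_eq_fintype_card, Fintype.card_sigma]
  have : (Nat.card X : ℚ) ≤
      (Nat.card (Quotient (MulAction.orbitRel G X)) : ℚ) * (Nat.card G : ℚ) / 2 := by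
    rw [hcardX]
    push_cast
    calc (∑ ω : Quotient (MulAction.orbitRel G X), (Nat.card (MulAction.orbit G ω.out) : ℚ))
        ≤ ∑ _ω : Quotient (MulAction.orbitRel G X), (Nat.card G : ℚ) / 2 :=
          Finset.sum_le_sum fun ω _ => horb ω.out
      _ = (Nat.card (Quotient (MulAction.orbitRel G X)) : ℚ) * (Nat.card G : ℚ) / 2 := by
          rw [Finset.sum_const, Finset.card_univ, nsmul_eq_mul, mul_div_assoc]
          norm_num [Nat.card_eq_fintype_card]
  linarith
end
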